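/- If there exist constants ε>0 and C>0 such that every disk D(λ, ε e^{−Cp(λ)}), λ ∈ Λ, contains at most n points of Λ, then X^{n-1}_p(Λ) = X^n_p(Λ): every function on Λ with uniformly bounded divided differences of order n−1 (with respect to p) also has uniformly bounded divided differences of order n. -/

import Mathlib

open Complex Metric Set

noncomputable def divDiff : (k : ℕ) → (ℂ → ℂ) → (Fin (k+1) → ℂ) → ℂ
  | 0, ω, z => ω (z 0)
  | k+1, ω, z =>
      (divDiff k ω (fun i => z i.succ) - divDiff k ω (fun i => z i.castSucc)) /
        (z (Fin.last (k+1)) - z 0)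

/-- `p` is a weight on `ℂ`: nonnegative, `p(z) ≥ K log(1+|z|²)` for some `K > 0`,
and `p(z) ≤ D₀ p(w) + E₀` whenever `|z-w| ≤ 1`. -/
def IsWeight (p : ℂ → ℝ) : Prop :=
  (∀ z, 0 ≤ p z) ∧
  (∃ K > 0, ∀ z : ℂ, K * Real.log (1 + ‖z‖ ^ 2) ≤ p z) ∧
  (∃ D > 0, ∃ E > 0, ∀ z w : ℂ, ‖z - w‖ ≤ 1 → p z ≤ D * p w + E)

/-- `ω ∈ X^k_p(Λ)`: the divided differences of order `k` (on `k+1` distinct points of `Λ`)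
are uniformly bounded with respect to the weight `p`. -/
def MemX (p : ℂ → ℝ) (Λ : Set ℂ) (k : ℕ) (ω : ℂ → ℂ) : Prop :=
  ∃ A > 0, ∃ B > 0, ∀ z : Fin (k+1) → ℂ, (∀ i, z i ∈ Λ) → Function.Injective z →
    ‖divDiff k ω z‖ ≤ A * Real.exp (B * ∑ i, p (z i))

/-- `f ∈ A_p`: `f` is entire with `|f(z)| ≤ A e^{B p(z)}` for some `A, B > 0`. -/
def MemAp (p : ℂ → ℝ) (f : ℂ → ℂ) : Prop :=
  Differentiable ℂ f ∧ ∃ A > 0, ∃ B > 0, ∀ z, ‖f z‖ ≤ A * Real.exp (B * p z)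

/-- `Λ` is interpolating for `A_p`. -/
def Interpolating (p : ℂ → ℝ) (Λ : Set ℂ) : Prop :=
  ∀ ω : ℂ → ℂ, (∃ A > 0, ∃ B > 0, ∀ l ∈ Λ, ‖ω l‖ ≤ A * Real.exp (B * p l)) →
    ∃ f, MemAp p f ∧ ∀ l ∈ Λ, f l = ω l

/-- Uniform interpolation bounds (Lemma 2.2.6 of Berenstein–Gay). -/
def UnifInterp (p : ℂ → ℝ) (Λ : Set ℂ) : Prop :=
  ∀ A > 0, ∀ B > 0, ∃ A' > 0, ∃ B' > 0, ∀ ω : ℂ → ℂ,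
    (∀ l ∈ Λ, ‖ω l‖ ≤ A * Real.exp (B * p l)) →
    ∃ f, Differentiable ℂ f ∧ (∀ z, ‖f z‖ ≤ A' * Real.exp (B' * p z)) ∧
      ∀ l ∈ Λ, f l = ω l

/-- `Λ` is weakly separated: the disks `D(l, ε e^{-C p l})` are pairwise disjoint. -/
def WeaklySeparated (p : ℂ → ℝ) (Λ : Set ℂ) : Prop :=
  ∃ ε > 0, ∃ C > 0, ∀ l ∈ Λ, ∀ m ∈ Λ, l ≠ m →
    Disjoint (ball l (ε * Real.exp (-C * p l))) (ball m (ε * Real.exp (-C * p m)))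

/-- `Λ` has no accumulation points in `ℂ`. -/
def DiscreteSet (Λ : Set ℂ) : Prop := ∀ z : ℂ, ¬ AccPt z (Filter.principal Λ)

lemma image_succ_erase (k : ℕ) (i : Fin (k+1)) :
    (Finset.univ.erase i).image Fin.succ = (Finset.univ.erase i.succ).erase (0 : Fin (k+2)) := by
  ext j
  simp only [Finset.mem_image, Finset.mem_erase, Finset.mem_univ, and_true]
  constructor
  · rintro ⟨a, ha, rfl⟩
    exact ⟨Fin.succ_ne_zero a, fun h => ha (Fin.succ_injective _ h)⟩
  · rintro ⟨hj0, hji⟩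
    obtain ⟨a, rfl⟩ := Fin.exists_succ_eq.2 hj0
    exact ⟨a, fun h => hji (by rw [h]), rfl⟩

lemma image_castSucc_erase (k : ℕ) (i : Fin (k+1)) :
    (Finset.univ.erase i).image Fin.castSucc
      = (Finset.univ.erase i.castSucc).erase (Fin.last (k+1)) := by
  ext j
  simp only [Finset.mem_image, Finset.mem_erase, Finset.mem_univ, and_true]
  constructor
  · rintro ⟨a, ha, rfl⟩
    exact ⟨(Fin.castSucc_lt_last a).ne, fun h => ha (Fin.castSucc_injective _ h)⟩
  · rintro ⟨hjl, hji⟩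
    obtain ⟨a, rfl⟩ := Fin.exists_castSucc_eq.2 hjl
    exact ⟨a, fun h => hji (by rw [h]), rfl⟩

lemma divDiff_eq_sum : ∀ (k : ℕ) (ω : ℂ → ℂ) (z : Fin (k+1) → ℂ), Function.Injective z →
    divDiff k ω z = ∑ i, ω (z i) / ∏ j ∈ Finset.univ.erase i, (z i - z j)
  | 0, ω, z, _ => by simp [divDiff]
  | (k+1), ω, z, hz => by
    have hlast0 : (Fin.last (k+1)) ≠ (0 : Fin (k+2)) := by
      simp [Fin.ext_iff]
    have hd : z (Fin.last (k+1)) - z 0 ≠ 0 := sub_ne_zero.2 (fun h => hlast0 (hz h))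
    have htail : divDiff k ω (fun i => z i.succ)
        = ∑ i : Fin (k+1), (ω (z i.succ) / ∏ j ∈ Finset.univ.erase i.succ, (z i.succ - z j))
            * (z i.succ - z 0) := by
      rw [divDiff_eq_sum k ω (fun i => z i.succ) (hz.comp (Fin.succ_injective _))]
      refine Finset.sum_congr rfl (fun i _ => ?_)
      have h0 : (0 : Fin (k+2)) ∈ Finset.univ.erase i.succ := by
        simp [Finset.mem_erase, (Fin.succ_ne_zero i).symm]
      have hprod : ∏ j ∈ Finset.univ.erase i.succ, (z i.succ - z j)
          = (z i.succ - z 0) * ∏ j ∈ Finset.univ.erase i, (z i.succ - z j.succ) := by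
        rw [← Finset.mul_prod_erase _ _ h0]
        congr 1
        rw [← image_succ_erase k i, Finset.prod_image]
        intro a _ b _ hab
        exact Fin.succ_injective _ hab
      have hne : z i.succ - z 0 ≠ 0 := sub_ne_zero.2 (fun h => Fin.succ_ne_zero i (hz h))
      rw [hprod, mul_comm (z i.succ - z 0), ← div_div, div_mul_cancel₀ _ hne]
    have hinit : divDiff k ω (fun i => z i.castSucc)
        = ∑ i : Fin (k+1), (ω (z i.castSucc) / ∏ j ∈ Finset.univ.erase i.castSucc, (z i.castSucc - z j))
            * (z i.castSucc - z (Fin.last (k+1))) := by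
      rw [divDiff_eq_sum k ω (fun i => z i.castSucc) (hz.comp (Fin.castSucc_injective _))]
      refine Finset.sum_congr rfl (fun i _ => ?_)
      have h0 : (Fin.last (k+1)) ∈ Finset.univ.erase i.castSucc := by
        simp [Finset.mem_erase, ((Fin.castSucc_lt_last i).ne).symm]
      have hprod : ∏ j ∈ Finset.univ.erase i.castSucc, (z i.castSucc - z j)
          = (z i.castSucc - z (Fin.last (k+1))) * ∏ j ∈ Finset.univ.erase i, (z i.castSucc - z j.castSucc) := by
        rw [← Finset.mul_prod_erase _ _ h0]
        congr 1
        rw [← image_castSucc_erase k i, Finset.prod_image]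
        intro a _ b _ hab
        exact Fin.castSucc_injective _ hab
      have hne : z i.castSucc - z (Fin.last (k+1)) ≠ 0 :=
        sub_ne_zero.2 (fun h => (Fin.castSucc_lt_last i).ne (hz h))
      rw [hprod, mul_comm (z i.castSucc - z (Fin.last (k+1))), ← div_div, div_mul_cancel₀ _ hne]
    show (divDiff k ω (fun i => z i.succ) - divDiff k ω (fun i => z i.castSucc)) /
        (z (Fin.last (k+1)) - z 0) = _
    rw [htail, hinit, div_eq_iff hd]
    set t : Fin (k+2) → ℂ := fun i => ω (z i) / ∏ j ∈ Finset.univ.erase i, (z i - z j) with ht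
    have e1 : ∑ i : Fin (k+1), t i.succ * (z i.succ - z 0)
        = ∑ i : Fin (k+2), t i * (z i - z 0) := by
      rw [Fin.sum_univ_succ (f := fun i => t i * (z i - z 0))]
      simp
    have e2 : ∑ i : Fin (k+1), t i.castSucc * (z i.castSucc - z (Fin.last (k+1)))
        = ∑ i : Fin (k+2), t i * (z i - z (Fin.last (k+1))) := by
      rw [Fin.sum_univ_castSucc (f := fun i => t i * (z i - z (Fin.last (k+1))))]
      simp
    rw [e1, e2, ← Finset.sum_sub_distrib, Finset.sum_mul]
    refine Finset.sum_congr rfl (fun i _ => ?_)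
    ring

lemma divDiff_comp_perm (k : ℕ) (ω : ℂ → ℂ) (z : Fin (k+1) → ℂ) (hz : Function.Injective z)
    (σ : Equiv.Perm (Fin (k+1))) :
    divDiff k ω (fun i => z (σ i)) = divDiff k ω z := by
  rw [divDiff_eq_sum k ω (fun i => z (σ i)) (hz.comp σ.injective), divDiff_eq_sum k ω z hz]
  refine Fintype.sum_equiv σ _ _ (fun i => ?_)
  congr 1
  have himg : (Finset.univ.erase i).image σ = Finset.univ.erase (σ i) := by
    rw [Finset.image_erase σ.injective]
    congr 1
    exact Finset.image_univ_equiv σ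
  rw [← himg, Finset.prod_image (fun a _ b _ hab => σ.injective hab)]


theorem stmt6 (p : ℂ → ℝ) (hp : IsWeight p) (Λ : Set ℂ) (k : ℕ)
    (h : ∃ ε > 0, ∃ C > 0, ∀ l ∈ Λ,
      (Λ ∩ ball l (ε * Real.exp (-C * p l))).encard ≤ (k + 1 : ℕ)) :
    ∀ ω : ℂ → ℂ, MemX p Λ k ω → MemX p Λ (k+1) ω := by
  obtain ⟨ε, hε, C, hC, hball⟩ := h
  obtain ⟨hp0, -, -⟩ := hp
  rintro ω ⟨A, hA, B, hB, hX⟩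
  refine ⟨2 * A / ε, by positivity, B + C, by positivity, ?_⟩
  intro z hzΛ hzinj
  set r := ε * Real.exp (-C * p (z 0)) with hr
  have hrpos : 0 < r := by positivity
  have hex : ∃ j, z j ∉ ball (z 0) r := by
    by_contra hcon
    push_neg at hcon
    have hsub : Set.range z ⊆ Λ ∩ ball (z 0) r := by
      rintro _ ⟨i, rfl⟩; exact ⟨hzΛ i, hcon i⟩
    have h1 : (Set.range z).encard = ((k+2 : ℕ) : ℕ∞) := by
      rw [← Set.image_univ, Set.InjOn.encard_image (hzinj.injOn), Set.encard_univ]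
      simp
      rfl
    have h2 := (Set.encard_mono hsub).trans (hball (z 0) (hzΛ 0))
    rw [h1] at h2
    have := Nat.cast_le.mp h2
    omega
  obtain ⟨j, hj⟩ := hex
  have hjdist : r ≤ ‖z j - z 0‖ := by
    rw [mem_ball, Complex.dist_eq] at hj
    linarith [not_lt.mp hj]
  have hj0 : j ≠ 0 := by
    rintro rfl
    exact hj (mem_ball_self hrpos)
  have hlast0 : (0 : Fin (k+2)) ≠ Fin.last (k+1) := (Fin.last_pos).ne
  set σ : Equiv.Perm (Fin (k+2)) := Equiv.swap j (Fin.last (k+1)) with hσ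
  have hσlast : σ (Fin.last (k+1)) = j := Equiv.swap_apply_right _ _
  have hσ0 : σ 0 = 0 := Equiv.swap_apply_of_ne_of_ne (Ne.symm hj0) hlast0
  set D1 := divDiff k ω (fun i => z (σ i.succ)) with hD1
  set D2 := divDiff k ω (fun i => z (σ i.castSucc)) with hD2
  have key : divDiff (k+1) ω z = (D1 - D2) / (z j - z 0) := by
    rw [← divDiff_comp_perm (k+1) ω z hzinj σ]
    show (divDiff k ω (fun i => z (σ i.succ)) - divDiff k ω (fun i => z (σ i.castSucc))) /
        (z (σ (Fin.last (k+1))) - z (σ 0)) = _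
    rw [hσlast, hσ0]
  set S := ∑ i : Fin (k+2), p (z i) with hS
  have hsumσ : ∑ i : Fin (k+2), p (z (σ i)) = S := Equiv.sum_comp σ (fun i => p (z i))
  have hpz0 : p (z 0) ≤ S := Finset.single_le_sum (fun i _ => hp0 (z i)) (Finset.mem_univ 0)
  have hbd1 : ‖D1‖ ≤ A * Real.exp (B * S) := by
    have hinj : Function.Injective (fun i : Fin (k+1) => z (σ i.succ)) :=
      (hzinj.comp σ.injective).comp (Fin.succ_injective _)
    have := hX (fun i => z (σ i.succ)) (fun i => hzΛ _) hinj
    refine this.trans ?_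
    have hsle : ∑ i : Fin (k+1), p (z (σ i.succ)) ≤ S := by
      have := Fin.sum_univ_succ (f := fun i => p (z (σ i)))
      have h0 := hp0 (z (σ 0))
      rw [hsumσ] at this
      linarith
    exact mul_le_mul_of_nonneg_left (Real.exp_le_exp.2 (by nlinarith)) hA.le
  have hbd2 : ‖D2‖ ≤ A * Real.exp (B * S) := by
    have hinj : Function.Injective (fun i : Fin (k+1) => z (σ i.castSucc)) :=
      (hzinj.comp σ.injective).comp (Fin.castSucc_injective _)
    have := hX (fun i => z (σ i.castSucc)) (fun i => hzΛ _) hinj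
    refine this.trans ?_
    have hsle : ∑ i : Fin (k+1), p (z (σ i.castSucc)) ≤ S := by
      have := Fin.sum_univ_castSucc (f := fun i => p (z (σ i)))
      have h0 := hp0 (z (σ (Fin.last (k+1))))
      rw [hsumσ] at this
      linarith
    exact mul_le_mul_of_nonneg_left (Real.exp_le_exp.2 (by nlinarith)) hA.le
  have hnum : ‖D1 - D2‖ ≤ 2 * A * Real.exp (B * S) := by
    calc ‖D1 - D2‖ ≤ ‖D1‖ + ‖D2‖ :=
          norm_sub_le _ _
    _ ≤ 2 * A * Real.exp (B * S) := by linarith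
  have hstep : ‖divDiff (k+1) ω z‖ ≤ 2 * A * Real.exp (B * S) / r := by
    rw [key, norm_div]
    exact div_le_div₀ (by positivity) hnum hrpos hjdist
  refine hstep.trans ?_
  have heq : 2 * A * Real.exp (B * S) / r
      = (2 * A / ε) * (Real.exp (B * S) * Real.exp (C * p (z 0))) := by
    rw [hr, neg_mul, Real.exp_neg]
    field_simp
  rw [heq, ← Real.exp_add]
  have hle : B * S + C * p (z 0) ≤ (B + C) * S := by nlinarith
  exact mul_le_mul_of_nonneg_left (Real.exp_le_exp.2 hle) (by positivity)
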